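/- Let Y₋, Y₊ be finite-valued random variables with joint distribution P(i,j) = Prob(Y₋=i, Y₊=j). Then there exists a random variable X taking values in {1,…,k} (on a possibly enlarged probability space) such that Y₋ and Y₊ are conditionally independent given X if and only if the matrix P admits a nonnegative factorization P = Q₋Q₊ with Q₋ ∈ ℝ_+^{m×k}, Q₊ ∈ ℝ_+^{k×n} and Q₊ row stochastic, where Q₋(i,l) = Prob(Y₋=i, X=l) and Q₊(l,j) = Prob(Y₊=j | X=l). -/

import Mathlib

open scoped BigOperators

theorem hidden_variable_iff_nmf {m n k : ℕ}
    (P : Matrix (Fin m) (Fin n) ℝ)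
    (hP : ∀ i j, 0 ≤ P i j) (hPsum : ∑ i, ∑ j, P i j = 1) :
    (∃ R : Fin m → Fin k → Fin n → ℝ,
      (∀ i l j, 0 ≤ R i l j) ∧
      (∑ i, ∑ l, ∑ j, R i l j = 1) ∧
      (∀ i j, ∑ l, R i l j = P i j) ∧
      -- conditional independence of Y₋ and Y₊ given X
      (∀ i l j, R i l j * (∑ i', ∑ j', R i' l j') =
        (∑ j', R i l j') * (∑ i', R i' l j))) ↔
    (∃ (Qm : Matrix (Fin m) (Fin k) ℝ) (Qp : Matrix (Fin k) (Fin n) ℝ),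
      (∀ i l, 0 ≤ Qm i l) ∧ (∀ l j, 0 ≤ Qp l j) ∧
      (∀ l, ∑ j, Qp l j = 1) ∧ P = Qm * Qp) := by
  have hn : n ≠ 0 := by
    rintro rfl
    simp at hPsum
  set j0 : Fin n := ⟨0, Nat.pos_of_ne_zero hn⟩ with hj0
  constructor
  · rintro ⟨R, hR0, hRsum, hRP, hCI⟩
    set p : Fin k → ℝ := fun l => ∑ i, ∑ j, R i l j with hp
    have hpnn : ∀ l, 0 ≤ p l := fun l =>
      Finset.sum_nonneg fun i _ => Finset.sum_nonneg fun j _ => hR0 i l j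
    have hz : ∀ l, p l = 0 → ∀ i j, R i l j = 0 := by
      intro l hl i j
      have h1 : ∀ i ∈ Finset.univ, (0:ℝ) ≤ ∑ j, R i l j := fun i _ =>
        Finset.sum_nonneg fun j _ => hR0 i l j
      have h2 := (Finset.sum_eq_zero_iff_of_nonneg h1).mp hl i (Finset.mem_univ i)
      exact (Finset.sum_eq_zero_iff_of_nonneg (fun j _ => hR0 i l j)).mp h2 j
        (Finset.mem_univ j)
    refine ⟨fun i l => ∑ j, R i l j,
      fun l j => if p l = 0 then (if j = j0 then 1 else 0) else (∑ i, R i l j) / p l,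
      fun i l => Finset.sum_nonneg fun j _ => hR0 i l j, ?_, ?_, ?_⟩
    · intro l j
      by_cases hl : p l = 0
      · simp only [hl, if_true]
        split_ifs <;> norm_num
      · simp only [hl, if_false]
        exact div_nonneg (Finset.sum_nonneg fun i _ => hR0 i l j) (hpnn l)
    · intro l
      by_cases hl : p l = 0
      · simp [hl]
      · simp only [hl, if_false]
        rw [← Finset.sum_div]
        rw [show (∑ j, ∑ i, R i l j) = p l from Finset.sum_comm, div_self hl]
    · ext i j
      change P i j = ∑ l, (∑ j, R i l j) * (if p l = 0 then (if j = j0 then 1 else 0) else (∑ i', R i' l j) / p l)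
      rw [← hRP i j]
      refine Finset.sum_congr rfl fun l _ => ?_
      by_cases hl : p l = 0
      · simp [hz l hl, hl]
      · simp only [hl, if_false]
        have hci := hCI i l j
        rw [← mul_div_assoc, eq_div_iff hl]
        linarith [hci]
  · rintro ⟨Qm, Qp, hQm, hQp, hQrow, hPQ⟩
    refine ⟨fun i l j => Qm i l * Qp l j,
      fun i l j => mul_nonneg (hQm i l) (hQp l j), ?_, ?_, ?_⟩
    · have h1 : ∀ i l, ∑ j, Qm i l * Qp l j = Qm i l := by
        intro i l
        rw [← Finset.mul_sum, hQrow l, mul_one]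
      calc ∑ i, ∑ l, ∑ j, Qm i l * Qp l j = ∑ i, ∑ l, Qm i l := by
            simp_rw [h1]
        _ = ∑ i, ∑ j, P i j := by
            refine Finset.sum_congr rfl fun i _ => ?_
            rw [hPQ]
            simp_rw [Matrix.mul_apply]
            rw [Finset.sum_comm]
            refine Finset.sum_congr rfl fun l _ => ?_
            rw [← Finset.mul_sum, hQrow l, mul_one]
        _ = 1 := hPsum
    · intro i j
      rw [hPQ, Matrix.mul_apply]
    · intro i l j
      have h1 : ∑ j', Qm i l * Qp l j' = Qm i l := by
        rw [← Finset.mul_sum, hQrow l, mul_one]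
      have h2 : (∑ i', ∑ j', Qm i' l * Qp l j') = ∑ i', Qm i' l := by
        refine Finset.sum_congr rfl fun i' _ => ?_
        rw [← Finset.mul_sum, hQrow l, mul_one]
      have h3 : (∑ i', Qm i' l * Qp l j) = (∑ i', Qm i' l) * Qp l j := by
        rw [Finset.sum_mul]
      rw [h1, h2, h3]
      ring
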